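/- Let N and L be positive integers with L ≤ N, and let μ : Fin N → ℝ with μ[n] ≥ 0 for all n and μ[n] ≤ (∑_i μ[i]) / L for every n. Then there exist F ≤ N, positive reals α_1,...,α_F with ∑_f α_f = (∑_n μ[n]) / L, and subsets P_1,...,P_F of Fin N each of cardinality exactly L, such that for every n, ∑_{f : n ∈ P_f} α_f = μ[n]. -/

import Mathlib

open Finset

/-- Selection of a "top m" subset. -/
lemma top_select {ι : Type*} [DecidableEq ι] (f : ι → ℝ) (m : ℕ) :
    ∀ s : Finset ι, m ≤ s.card →
      ∃ t, t ⊆ s ∧ t.card = m ∧ ∀ x ∈ t, ∀ y ∈ s, y ∉ t → f y ≤ f x := by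
  induction m with
  | zero => exact fun s _ => ⟨∅, empty_subset s, rfl, by simp⟩
  | succ m ih =>
    intro s hm
    obtain ⟨t, hts, htc, hmax⟩ := ih s (le_trans (Nat.le_succ m) hm)
    have hne : (s \ t).Nonempty := by
      rw [← Finset.card_pos, Finset.card_sdiff_of_subset hts]
      omega
    obtain ⟨x, hx, hxmax⟩ := (s \ t).exists_max_image f hne
    have hxs : x ∈ s := (Finset.mem_sdiff.mp hx).1
    have hxt : x ∉ t := (Finset.mem_sdiff.mp hx).2
    refine ⟨insert x t, Finset.insert_subset hxs hts,
      by rw [Finset.card_insert_of_notMem hxt, htc], ?_⟩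
    intro z hz y hy hyt
    have hyt' : y ∉ t := fun h => hyt (Finset.mem_insert_of_mem h)
    rcases Finset.mem_insert.mp hz with rfl | hzt
    · exact hxmax y (Finset.mem_sdiff.mpr ⟨hy, hyt'⟩)
    · exact hmax z hzt y hy hyt'

lemma all_eq_aux (N L : ℕ) (hL : 0 < L) (μ : Fin N → ℝ) (h0 : ∀ n, 0 ≤ μ n)
    (hb : ∀ n, μ n ≤ (∑ i, μ i) / L) (hS : 0 < ∑ i, μ i)
    (hk : (univ.filter fun n => 0 < μ n).card ≤ L) :
    (univ.filter fun n => 0 < μ n).card = L ∧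
      ∀ n, 0 < μ n → μ n = (∑ i, μ i) / L := by
  set S := ∑ i, μ i with hSdef
  set T := S / L with hTdef
  have hL0 : (L : ℝ) ≠ 0 := Nat.cast_ne_zero.mpr hL.ne'
  have hLpos : (0:ℝ) < L := by exact_mod_cast hL
  have hT : 0 < T := div_pos hS hLpos
  have hLT : (L : ℝ) * T = S := by
    rw [hTdef]; field_simp
  set pos := univ.filter fun n => 0 < μ n with hposdef
  have hSsum : ∑ n ∈ pos, μ n = S := by
    rw [hposdef]
    exact Finset.sum_filter_of_ne (fun x _ hx => lt_of_le_of_ne (h0 x) (Ne.symm hx))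
  have hle : S ≤ pos.card * T := by
    calc S = ∑ n ∈ pos, μ n := hSsum.symm
    _ ≤ ∑ _n ∈ pos, T := Finset.sum_le_sum (fun n _ => hb n)
    _ = pos.card * T := by rw [Finset.sum_const, nsmul_eq_mul]
  have hge : (pos.card : ℝ) * T ≤ L * T := by
    apply mul_le_mul_of_nonneg_right _ hT.le
    exact_mod_cast hk
  have heq : (pos.card : ℝ) * T = L * T := le_antisymm hge (by rw [hLT]; exact hle)
  have hcardeq : pos.card = L := by
    have : (pos.card : ℝ) = L := mul_right_cancel₀ hT.ne' heq
    exact_mod_cast this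
  refine ⟨hcardeq, ?_⟩
  have hzero : ∑ n ∈ pos, (T - μ n) = 0 := by
    rw [Finset.sum_sub_distrib, Finset.sum_const, nsmul_eq_mul, hSsum, hcardeq, hLT]
    ring
  have hall := (Finset.sum_eq_zero_iff_of_nonneg
    (fun n _ => sub_nonneg.mpr (hb n))).mp hzero
  intro n hn
  have hnpos : n ∈ pos := by
    rw [hposdef]; exact Finset.mem_filter.mpr ⟨mem_univ n, hn⟩
  have := hall n hnpos
  linarith

lemma pin_lt (N L : ℕ) (hL : 0 < L) (μ : Fin N → ℝ) (h0 : ∀ n, 0 ≤ μ n)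
    (hS : 0 < ∑ i, μ i)
    (hk : L < (univ.filter fun n => 0 < μ n).card) :
    (univ.filter fun n => μ n = (∑ i, μ i) / L ∧ 0 < μ n).card + 1 ≤ L := by
  set S := ∑ i, μ i with hSdef
  set T := S / L with hTdef
  have hL0 : (L : ℝ) ≠ 0 := Nat.cast_ne_zero.mpr hL.ne'
  have hLpos : (0:ℝ) < L := by exact_mod_cast hL
  have hT : 0 < T := div_pos hS hLpos
  have hLT : (L : ℝ) * T = S := by rw [hTdef]; field_simp
  set pin := univ.filter (fun n => μ n = T ∧ 0 < μ n) with hpindef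
  have hpinval : ∀ n ∈ pin, μ n = T := fun n hn => (Finset.mem_filter.mp hn).2.1
  have hpinsum : ∑ n ∈ pin, μ n = pin.card * T := by
    rw [Finset.sum_congr rfl hpinval, Finset.sum_const, nsmul_eq_mul]
  have hsd : ∑ n ∈ univ \ pin, μ n + ∑ n ∈ pin, μ n = S := by
    rw [hSdef]; exact Finset.sum_sdiff (Finset.subset_univ pin)
  have hsdnn : 0 ≤ ∑ n ∈ univ \ pin, μ n := Finset.sum_nonneg (fun n _ => h0 n)
  have hple : (pin.card : ℝ) * T ≤ L * T := by rw [hLT]; linarith [hpinsum]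
  have hpleL : pin.card ≤ L := by
    have : (pin.card : ℝ) ≤ L := le_of_mul_le_mul_right (by linarith) hT
    exact_mod_cast this
  rcases lt_or_eq_of_le hpleL with h | h
  · omega
  · exfalso
    have hrest : ∑ n ∈ univ \ pin, μ n = 0 := by
      rw [hpinsum, h] at hsd; linarith [hLT]
    have hallz := (Finset.sum_eq_zero_iff_of_nonneg (fun n _ => h0 n)).mp hrest
    have hsub : (univ.filter fun n => 0 < μ n) ⊆ pin := by
      intro n hn
      have hn' : 0 < μ n := (Finset.mem_filter.mp hn).2
      by_contra hnp
      have : μ n = 0 := hallz n (Finset.mem_sdiff.mpr ⟨mem_univ n, hnp⟩)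
      linarith
    have := Finset.card_le_card hsub
    omega

/-- The statement of the inductive claim for the filling algorithm. -/
def FillClaim (N L : ℕ) (μ : Fin N → ℝ) : Prop :=
  ∃ (F : ℕ) (α : Fin F → ℝ) (P : Fin F → Finset (Fin N)),
    F ≤ (univ.filter fun n => 0 < μ n).card ∧
    F + (univ.filter fun n => μ n = (∑ i, μ i) / L ∧ 0 < μ n).card
      ≤ (univ.filter fun n => 0 < μ n).card + 1 ∧
    (L < (univ.filter fun n => 0 < μ n).card →
      F + (univ.filter fun n => μ n = (∑ i, μ i) / L ∧ 0 < μ n).card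
        ≤ (univ.filter fun n => 0 < μ n).card) ∧
    (∀ f, 0 < α f) ∧ (∑ f, α f = (∑ i, μ i) / L) ∧ (∀ f, (P f).card = L) ∧
    (∀ n, ∑ f ∈ univ.filter (fun f => n ∈ P f), α f = μ n)

lemma base_zero (N L : ℕ) (μ : Fin N → ℝ) (h0 : ∀ n, 0 ≤ μ n)
    (hS : ∑ i, μ i = 0) : FillClaim N L μ := by
  have hz : ∀ n ∈ (univ : Finset (Fin N)), μ n = 0 :=
    (Finset.sum_eq_zero_iff_of_nonneg (fun n _ => h0 n)).mp hS
  refine ⟨0, Fin.elim0, Fin.elim0, Nat.zero_le _, ?_, ?_, fun f => f.elim0, by simp [hS],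
    fun f => f.elim0, ?_⟩
  · have : (univ.filter fun n => μ n = (∑ i, μ i) / L ∧ 0 < μ n) = ∅ := by
      apply Finset.filter_false_of_mem
      intro n _
      rw [hz n (mem_univ n)]
      simp
    simp [this]
  · intro h
    have : (univ.filter fun n => μ n = (∑ i, μ i) / L ∧ 0 < μ n) ⊆
        (univ.filter fun n => 0 < μ n) := by
      intro n hn
      exact Finset.mem_filter.mpr ⟨mem_univ n, (Finset.mem_filter.mp hn).2.2⟩
    have := Finset.card_le_card this
    omega
  · intro n
    classical
    rw [Finset.eq_empty_of_isEmpty (univ.filter _), Finset.sum_empty, hz n (mem_univ n)]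

lemma base_one (N L : ℕ) (hL : 0 < L) (μ : Fin N → ℝ) (h0 : ∀ n, 0 ≤ μ n)
    (hb : ∀ n, μ n ≤ (∑ i, μ i) / L) (hS : 0 < ∑ i, μ i)
    (hk : (univ.filter fun n => 0 < μ n).card ≤ L) : FillClaim N L μ := by
  obtain ⟨hkL, hval⟩ := all_eq_aux N L hL μ h0 hb hS hk
  have hLpos : (0:ℝ) < L := by exact_mod_cast hL
  have hT : 0 < (∑ i, μ i) / L := div_pos hS hLpos
  have hpineq : (univ.filter fun n => μ n = (∑ i, μ i) / L ∧ 0 < μ n)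
      = (univ.filter fun n => 0 < μ n) := by
    apply Finset.filter_congr
    intro n _
    constructor
    · exact fun h => h.2
    · exact fun h => ⟨hval n h, h⟩
  refine ⟨1, fun _ => (∑ i, μ i) / L, fun _ => univ.filter fun n => 0 < μ n,
    by omega, by rw [hpineq]; omega, by intro h; omega, fun _ => hT,
    by rw [Fin.sum_univ_one], fun _ => hkL, ?_⟩
  intro n
  by_cases hn : n ∈ univ.filter fun n => 0 < μ n
  · rw [Finset.filter_true_of_mem (fun f _ => hn)]
    have hn' : 0 < μ n := (Finset.mem_filter.mp hn).2
    rw [← hval n hn']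
    simp
  · rw [Finset.filter_false_of_mem (fun f _ => hn), Finset.sum_empty]
    have : ¬ 0 < μ n := fun h => hn (Finset.mem_filter.mpr ⟨mem_univ n, h⟩)
    linarith [h0 n]

lemma fill_main (N L : ℕ) (hL : 0 < L) :
    ∀ d : ℕ, ∀ μ : Fin N → ℝ, (∀ n, 0 ≤ μ n) → (∀ n, μ n ≤ (∑ i, μ i) / L) →
      (univ.filter fun n => 0 < μ n).card ≤
        d + (univ.filter fun n => μ n = (∑ i, μ i) / L ∧ 0 < μ n).card →
      FillClaim N L μ := by
  intro d
  induction d with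
  | zero =>
    intro μ h0 hb hd
    rcases (Finset.sum_nonneg (fun (n : Fin N) _ => h0 n)).eq_or_lt with hS | hS
    · exact base_zero N L μ h0 hS.symm
    · by_cases hk : (univ.filter fun n => 0 < μ n).card ≤ L
      · exact base_one N L hL μ h0 hb hS hk
      · exfalso
        push_neg at hk
        have hpin := pin_lt N L hL μ h0 hS hk
        omega
  | succ d ih =>
    intro μ h0 hb hd
    rcases (Finset.sum_nonneg (fun (n : Fin N) _ => h0 n)).eq_or_lt with hS | hS
    · exact base_zero N L μ h0 hS.symm
    · by_cases hk : (univ.filter fun n => 0 < μ n).card ≤ L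
      · exact base_one N L hL μ h0 hb hS hk
      · push_neg at hk
        have hL0 : (L : ℝ) ≠ 0 := Nat.cast_ne_zero.mpr hL.ne'
        have hLpos : (0:ℝ) < L := by exact_mod_cast hL
        have hT : 0 < (∑ i, μ i) / L := div_pos hS hLpos
        have hLT : (L:ℝ) * ((∑ i, μ i) / L) = ∑ i, μ i := by field_simp
        have hp1L := pin_lt N L hL μ h0 hS hk
        obtain ⟨P, hPsub, hPcard, hPtop⟩ :=
          top_select μ L (univ.filter fun n => 0 < μ n) hk.le
        have hpinP : (univ.filter fun n => μ n = (∑ i, μ i) / L ∧ 0 < μ n) ⊆ P := by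
          intro x hx
          by_contra hxP
          have hxpos : x ∈ univ.filter fun n => 0 < μ n :=
            Finset.mem_filter.mpr ⟨mem_univ x, (Finset.mem_filter.mp hx).2.2⟩
          have hPpin : P ⊆ (univ.filter fun n => μ n = (∑ i, μ i) / L ∧ 0 < μ n) := by
            intro m hm
            have h1 : μ x ≤ μ m := hPtop m hm x hxpos hxP
            have hxT : μ x = (∑ i, μ i) / L := (Finset.mem_filter.mp hx).2.1
            have h2 : μ m = (∑ i, μ i) / L := le_antisymm (hb m) (by rw [← hxT]; exact h1)
            exact Finset.mem_filter.mpr ⟨mem_univ m,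
              h2, (Finset.mem_filter.mp (hPsub hm)).2⟩
          have := Finset.card_le_card hPpin
          omega
        obtain ⟨n₀, hn₀P, hn₀min⟩ := P.exists_min_image μ
          (Finset.card_pos.mp (by rw [hPcard]; exact hL))
        have ha_pos : 0 < μ n₀ := (Finset.mem_filter.mp (hPsub hn₀P)).2
        obtain ⟨n₂, hn₂pos, hn₂P⟩ :
            ∃ n2, n2 ∈ (univ.filter fun n => 0 < μ n) ∧ n2 ∉ P := by
          by_contra h
          push_neg at h
          have := Finset.card_le_card (fun n hn => h n hn)
          omega
        obtain ⟨n₁, hn₁mem, hn₁max⟩ := (univ \ P).exists_max_image μ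
          ⟨n₂, Finset.mem_sdiff.mpr ⟨mem_univ n₂, hn₂P⟩⟩
        have hn₁P : n₁ ∉ P := (Finset.mem_sdiff.mp hn₁mem).2
        have hb_pos : 0 < μ n₁ :=
          lt_of_lt_of_le (Finset.mem_filter.mp hn₂pos).2
            (hn₁max n₂ (Finset.mem_sdiff.mpr ⟨mem_univ n₂, hn₂P⟩))
        have hout : ∀ y, y ∉ P → μ y ≤ μ n₁ := fun y hy =>
          hn₁max y (Finset.mem_sdiff.mpr ⟨mem_univ y, hy⟩)
        have hbT : μ n₁ < (∑ i, μ i) / L := by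
          rcases lt_or_eq_of_le (hb n₁) with h | h
          · exact h
          · exact absurd (hpinP (Finset.mem_filter.mpr ⟨mem_univ n₁, h, hb_pos⟩)) hn₁P
        set α0 := min (μ n₀) ((∑ i, μ i) / L - μ n₁) with hα0def
        have hα0pos : 0 < α0 := lt_min ha_pos (by linarith)
        have hα0a : α0 ≤ μ n₀ := min_le_left _ _
        have hα0Tb : α0 ≤ (∑ i, μ i) / L - μ n₁ := min_le_right _ _
        have hT'pos : 0 < (∑ i, μ i) / L - α0 := by linarith
        set μ' : Fin N → ℝ := fun n => if n ∈ P then μ n - α0 else μ n with hμ'def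
        have hμ'le : ∀ n, μ' n ≤ μ n := by
          intro n; rw [hμ'def]; dsimp only; split <;> linarith
        have h0' : ∀ n, 0 ≤ μ' n := by
          intro n; rw [hμ'def]; dsimp only; split
          · rename_i hmem
            have := hn₀min n hmem; linarith
          · exact h0 n
        have hsum' : ∑ i, μ' i = (∑ i, μ i) - L * α0 := by
          have hterm : ∀ i ∈ (univ : Finset (Fin N)),
              μ' i = μ i - (if i ∈ P then α0 else 0) := by
            intro i _; rw [hμ'def]; dsimp only; split <;> simp
          rw [Finset.sum_congr rfl hterm, Finset.sum_sub_distrib, Finset.sum_ite_mem,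
            Finset.univ_inter, Finset.sum_const, hPcard, nsmul_eq_mul]
        have hT' : (∑ i, μ' i) / L = (∑ i, μ i) / L - α0 := by
          rw [hsum', sub_div, mul_div_cancel_left₀ _ hL0]
        have hS' : 0 < ∑ i, μ' i := by
          have h := mul_pos hLpos hT'pos
          rw [mul_sub, hLT] at h
          rw [hsum']
          linarith
        have hb' : ∀ n, μ' n ≤ (∑ i, μ' i) / L := by
          intro n
          rw [hT', hμ'def]; dsimp only; split
          · linarith [hb n]
          · rename_i hmem
            have := hout n hmem; linarith
        have hpos_sub : (univ.filter fun n => 0 < μ' n) ⊆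
            (univ.filter fun n => 0 < μ n) := by
          intro n hn
          have := (Finset.mem_filter.mp hn).2
          exact Finset.mem_filter.mpr ⟨mem_univ n, lt_of_lt_of_le this (hμ'le n)⟩
        have hpin_sub : (univ.filter fun n => μ n = (∑ i, μ i) / L ∧ 0 < μ n) ⊆
            (univ.filter fun n => μ' n = (∑ i, μ' i) / L ∧ 0 < μ' n) := by
          intro n hn
          have hnP : n ∈ P := hpinP hn
          have hval : μ n = (∑ i, μ i) / L := (Finset.mem_filter.mp hn).2.1
          have hμ'n : μ' n = (∑ i, μ i) / L - α0 := by
            rw [hμ'def]; dsimp only; rw [if_pos hnP, hval]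
          exact Finset.mem_filter.mpr ⟨mem_univ n, by rw [hμ'n, hT'],
            by rw [hμ'n]; exact hT'pos⟩
        have hkey : (univ.filter fun n => 0 < μ' n).card +
            (univ.filter fun n => μ n = (∑ i, μ i) / L ∧ 0 < μ n).card + 1 ≤
            (univ.filter fun n => 0 < μ n).card +
            (univ.filter fun n => μ' n = (∑ i, μ' i) / L ∧ 0 < μ' n).card := by
          by_cases hab : μ n₀ ≤ (∑ i, μ i) / L - μ n₁
          · have hα0eq : α0 = μ n₀ := min_eq_left hab
            have hz : μ' n₀ = 0 := by
              rw [hμ'def]; dsimp only; rw [if_pos hn₀P, hα0eq]; ring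
            have hsub2 : (univ.filter fun n => 0 < μ' n) ⊆
                (univ.filter fun n => 0 < μ n).erase n₀ := by
              intro n hn
              have hn' := (Finset.mem_filter.mp hn).2
              refine Finset.mem_erase.mpr ⟨?_, hpos_sub hn⟩
              rintro rfl
              rw [hz] at hn'
              exact lt_irrefl 0 hn'
            have h1 := Finset.card_le_card hsub2
            rw [Finset.card_erase_of_mem (hPsub hn₀P)] at h1
            have h2 := Finset.card_le_card hpin_sub
            have h3 : 0 < (univ.filter fun n => 0 < μ n).card :=
              Finset.card_pos.mpr ⟨n₀, hPsub hn₀P⟩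
            omega
          · push_neg at hab
            have hα0eq : α0 = (∑ i, μ i) / L - μ n₁ := min_eq_right hab.le
            have hμ'n₁ : μ' n₁ = μ n₁ := by
              rw [hμ'def]; dsimp only; rw [if_neg hn₁P]
            have hn₁pin' : n₁ ∈ (univ.filter fun n =>
                μ' n = (∑ i, μ' i) / L ∧ 0 < μ' n) := by
              refine Finset.mem_filter.mpr ⟨mem_univ n₁, ?_, by rw [hμ'n₁]; exact hb_pos⟩
              rw [hμ'n₁, hT', hα0eq]; ring
            have hn₁pin : n₁ ∉ (univ.filter fun n => μ n = (∑ i, μ i) / L ∧ 0 < μ n) := by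
              intro h
              have := (Finset.mem_filter.mp h).2.1
              linarith
            have hsub2 : insert n₁ (univ.filter fun n => μ n = (∑ i, μ i) / L ∧ 0 < μ n) ⊆
                (univ.filter fun n => μ' n = (∑ i, μ' i) / L ∧ 0 < μ' n) := by
              intro n hn
              rcases Finset.mem_insert.mp hn with rfl | hn
              · exact hn₁pin'
              · exact hpin_sub hn
            have h1 := Finset.card_le_card hsub2
            rw [Finset.card_insert_of_notMem hn₁pin] at h1
            have h2 := Finset.card_le_card hpos_sub
            omega
        have hd' : (univ.filter fun n => 0 < μ' n).card ≤
            d + (univ.filter fun n => μ' n = (∑ i, μ' i) / L ∧ 0 < μ' n).card := by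
          omega
        obtain ⟨F', α', P', hC0', hC1', hC2', hαpos', hαsum', hcard', hload'⟩ :=
          ih μ' h0' hb' hd'
        have hgoal2 : F' + 1 + (univ.filter fun n => μ n = (∑ i, μ i) / L ∧ 0 < μ n).card ≤
            (univ.filter fun n => 0 < μ n).card := by
          by_cases hk' : L < (univ.filter fun n => 0 < μ' n).card
          · have := hC2' hk'
            omega
          · push_neg at hk'
            obtain ⟨hk'eq, hval'⟩ := all_eq_aux N L hL μ' h0' hb' hS' hk'
            have hpin'eq : (univ.filter fun n => μ' n = (∑ i, μ' i) / L ∧ 0 < μ' n)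
                = (univ.filter fun n => 0 < μ' n) := by
              apply Finset.filter_congr
              intro n _
              constructor
              · exact fun h => h.2
              · exact fun h => ⟨hval' n h, h⟩
            rw [hpin'eq] at hC1' hkey
            omega
        have hload2 : ∀ n, (∑ f : Fin F', if n ∈ P' f then α' f else 0) = μ' n := by
          intro n
          rw [← Finset.sum_filter]
          exact hload' n
        refine ⟨F' + 1, Fin.cons α0 α', Fin.cons P P', by omega, by omega,
          fun _ => hgoal2, ?_, ?_, ?_, ?_⟩
        · intro f
          refine Fin.cases ?_ ?_ f
          · simpa using hα0pos
          · intro i; simpa using hαpos' i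
        · rw [Fin.sum_cons, hαsum', hT']; ring
        · intro f
          refine Fin.cases ?_ ?_ f
          · simpa using hPcard
          · intro i; simpa using hcard' i
        · intro n
          rw [Finset.sum_filter, Fin.sum_univ_succ]
          simp only [Fin.cons_zero, Fin.cons_succ]
          rw [hload2 n, hμ'def]
          dsimp only
          by_cases hnP : n ∈ P
          · rw [if_pos hnP, if_pos hnP]; ring
          · rw [if_neg hnP, if_neg hnP]; ring

theorem stmt8 (N L : ℕ) (hN : 0 < N) (hL : 0 < L) (hLN : L ≤ N)
    (μ : Fin N → ℝ) (hμ : ∀ n, 0 ≤ μ n)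
    (hbound : ∀ n, μ n ≤ (∑ i, μ i) / L) :
    ∃ (F : ℕ), F ≤ N ∧
      ∃ (α : Fin F → ℝ) (P : Fin F → Finset (Fin N)),
        (∀ f, 0 < α f) ∧
        (∑ f, α f = (∑ n, μ n) / L) ∧
        (∀ f, (P f).card = L) ∧
        (∀ n, ∑ f ∈ univ.filter (fun f => n ∈ P f), α f = μ n) := by
  obtain ⟨F, α, P, hC0, _, _, hpos, hsum, hcard, hload⟩ :=
    fill_main N L hL ((univ.filter fun n => 0 < μ n).card) μ hμ hbound
      (Nat.le_add_right _ _)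
  refine ⟨F, ?_, α, P, hpos, hsum, hcard, hload⟩
  refine le_trans hC0 (le_trans (Finset.card_filter_le univ _) ?_)
  simp
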